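/- Let λ be a p-regular partition of n of the form λ = (b^a, (b-1)^{p-1}, ..., (b-t+1)^{p-1}, (b-t)^{p-1}, ...) with 1 < a < p, and let i be the row index such that λ - ε_i is obtained by removing the last box of the parts equal to b-t. Then none of the partitions μ obtained from λ - ε_i by adding a box in a row strictly above row i (so that μ strictly dominates λ and |μ| = n) has the same p-core as λ. -/

import Mathlib

def IsPartWithin (n : ℕ) (f : ℕ → ℕ) : Prop :=
  (∀ i j, i ≤ j → f j ≤ f i) ∧ ∀ i, n ≤ i → f i = 0

def psize (n : ℕ) (f : ℕ → ℕ) : ℕ := ∑ i ∈ Finset.range n, f i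

/-- `λ - ε_i`: remove one box from (0-indexed) row `i`. -/
def removeBox (f : ℕ → ℕ) (i : ℕ) : ℕ → ℕ :=
  fun j => if j = i then f i - 1 else f j

/-- beads on runner `r` of James' abacus with `n` beads (β-sequence `λ_j - j + n`).
Two partitions of `n` have the same `p`-core iff these counts all agree. -/
def runnerCount (p n : ℕ) (f : ℕ → ℕ) (r : ZMod p) : ℕ :=
  ((Finset.range n).filter fun i => (((f i : ℤ) - (i + 1) + n : ℤ) : ZMod p) = r).card

lemma aux_not_dvd_of_between (p : ℕ) (k c : ℤ) (h1 : (p:ℤ)*k < c) (h2 : c < (p:ℤ)*(k+1)) :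
    ¬ (p:ℤ) ∣ c := by
  rintro ⟨m, rfl⟩
  have hp0 : (0:ℤ) < p := by
    rcases Nat.eq_zero_or_pos p with h | h
    · subst h; simp at h1 h2
    · exact_mod_cast h
  have hk : k < m := lt_of_mul_lt_mul_left h1 hp0.le
  have hm : m < k + 1 := lt_of_mul_lt_mul_left h2 hp0.le
  omega

lemma aux_succ_ne (p : ℕ) (hp : 2 ≤ p) (x : ℤ) :
    ((x : ZMod p)) ≠ (((x + 1 : ℤ)) : ZMod p) := by
  intro h
  rw [ZMod.intCast_eq_intCast_iff] at h
  have h1 : (p:ℤ) ∣ 1 := by simpa using Int.ModEq.dvd h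
  have := Int.le_of_dvd one_pos h1
  omega

/-- from the proof of Lemma 6.5: let `λ` be a partition of `n` of the
form `(b^a, (b-1)^{p-1}, …, (b-t+1)^{p-1}, (b-t)^{p-1}, …)` with `1 < a < p`, and let
`i = a + t(p-1)` (1-indexed) be the last row of the block of parts equal to `b - t`.
Then no partition `μ` obtained from `λ - ε_i` by adding a box in a row `j` strictly
above row `i` (so that `μ ⊳ λ - ε_i`, `μ` strictly dominates `λ` and `|μ| = n`) has
the same `p`-core as `λ`. -/
theorem dominating_additions_have_different_core
    (p : ℕ) (hp : p.Prime) (n : ℕ)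
    (lam : ℕ → ℕ) (hpart : IsPartWithin n lam) (hsz : psize n lam = n)
    (a b t : ℕ) (ha1 : 1 < a) (hap : a < p) (hb : 0 < b) (htb : t < b)
    (hform1 : ∀ j, 1 ≤ j → j ≤ a → lam (j - 1) = b)
    (hform2 : ∀ s j, 1 ≤ s → s ≤ t → a + (s - 1) * (p - 1) < j → j ≤ a + s * (p - 1) →
      lam (j - 1) = b - s)
    (i : ℕ) (hi : i = a + t * (p - 1))
    (hbelow : lam i < b - t) :
    ∀ j, 1 ≤ j → j < i →
      ∀ mu : ℕ → ℕ,
        (∀ m, mu m = if m = j - 1 then lam (j - 1) + 1 else removeBox lam (i - 1) m) →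
        IsPartWithin n mu →
        ¬ (∀ r : ZMod p, runnerCount p n mu r = runnerCount p n lam r) := by
  intro j hj1 hji mu hmu hmupart hcontra
  have hp1 : 1 ≤ p := hp.one_le
  have hp2 : 2 ≤ p := hp.two_le
  have hia : a ≤ i := hi ▸ Nat.le_add_right a _
  -- lam at row i
  have hlami : lam (i - 1) = b - t := by
    rcases Nat.eq_zero_or_pos t with ht0 | ht1
    · rw [ht0, zero_mul, add_zero] at hi
      rw [hi, ht0, Nat.sub_zero]
      exact hform1 a (by omega) le_rfl
    · refine hform2 t i ht1 le_rfl ?_ (le_of_eq hi)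
      have hlt : (t-1)*(p-1) < t*(p-1) := by
        have h1 : ((t-1)+1)*(p-1) = (t-1)*(p-1) + (p-1) := by ring
        have h2 : (t-1)+1 = t := by omega
        rw [h2] at h1
        omega
      rw [hi]
      exact Nat.add_lt_add_left hlt a
  have hin : i ≤ n := by
    by_contra hcon
    have h0 : lam (i-1) = 0 := hpart.2 (i-1) (by omega)
    omega
  -- the i-cast
  have hiZ : (i:ℤ) = (a:ℤ) + (t:ℤ)*((p:ℤ)-1) := by
    subst hi; push_cast [Nat.cast_sub hp1]; ring
  have hbti : ((lam (i-1) : ℤ)) = (b:ℤ) - (t:ℤ) := by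
    rw [hlami]; push_cast [Nat.cast_sub htb.le]; ring
  -- key arithmetic fact
  have hkey : ¬ (p:ℤ) ∣ (((lam (j-1) : ℤ) + 1 - (j:ℤ)) - (((lam (i-1):ℤ)) - (i:ℤ))) := by
    rw [hbti]
    rcases le_or_gt j a with hja | hja
    · rw [hform1 j hj1 hja]
      have heq : ((b:ℤ) + 1 - (j:ℤ)) - (((b:ℤ) - t) - i) = ((a:ℤ) + 1 - j) + (p:ℤ)*t := by
        rw [hiZ]; ring
      rw [heq]
      have hjZ : (1:ℤ) ≤ (j:ℤ) := by exact_mod_cast hj1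
      have hjaZ : (j:ℤ) ≤ (a:ℤ) := by exact_mod_cast hja
      have hapZ : (a:ℤ) < (p:ℤ) := by exact_mod_cast hap
      apply aux_not_dvd_of_between p t
      · linarith
      · linarith
    · -- a < j : find the block s
      have ht1 : 1 ≤ t := by
        by_contra hcon
        have ht0 : t = 0 := by omega
        rw [ht0, zero_mul, add_zero] at hi
        omega
      obtain ⟨q, mrem, hqm, hmrem⟩ : ∃ q mrem, q * (p-1) + mrem = j - a - 1 ∧ mrem < p - 1 := by
        refine ⟨(j - a - 1) / (p-1), (j - a - 1) % (p-1), ?_, Nat.mod_lt _ (by omega)⟩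
        rw [Nat.mul_comm]
        exact Nat.div_add_mod _ _
      have hC : j - a - 1 < t * (p-1) := by omega
      have hqt : q < t := by
        have h1 : q * (p-1) < t * (p-1) := by omega
        exact lt_of_mul_lt_mul_right h1 (Nat.zero_le _)
      have hlo : a + q * (p - 1) < j := by omega
      have hhi2 : j ≤ a + (q+1) * (p - 1) := by
        have h1 : (q+1) * (p-1) = q * (p-1) + (p-1) := by ring
        omega
      have hform : lam (j - 1) = b - (q+1) := hform2 (q+1) j (by omega) (by omega) hlo hhi2
      rw [hform]
      have hsb : q + 1 ≤ b := by omega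
      have heq : (((b - (q+1) : ℕ):ℤ) + 1 - (j:ℤ)) - (((b:ℤ) - t) - i)
          = ((a:ℤ) + 1 - (j:ℤ) - ((q:ℤ)+1)) + (p:ℤ)*(t:ℤ) := by
        rw [hiZ, Nat.cast_sub hsb]; push_cast; ring
      rw [heq]
      -- cast the bounds
      have hloZ : (a:ℤ) + (q:ℤ) * ((p:ℤ)-1) < (j:ℤ) := by
        have h := (Nat.cast_lt (α := ℤ)).mpr hlo
        push_cast [Nat.cast_sub hp1] at h
        linarith
      have hhiZ : (j:ℤ) ≤ (a:ℤ) + ((q:ℤ)+1) * ((p:ℤ)-1) := by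
        have h := (Nat.cast_le (α := ℤ)).mpr hhi2
        push_cast [Nat.cast_sub hp1] at h
        linarith
      apply aux_not_dvd_of_between p ((t:ℤ) - ((q:ℤ)+1))
      · linarith
      · linarith
  -- the distinguished runner
  have hcard := hcontra ((((lam (j-1):ℤ) + 1 - (j:ℤ) + (n:ℤ) : ℤ)) : ZMod p)
  unfold runnerCount at hcard
  set r : ZMod p := (((lam (j-1):ℤ) + 1 - (j:ℤ) + (n:ℤ) : ℤ) : ZMod p) with hr
  -- the two beta-number rewrites
  have hjm1 : ((j - 1 : ℕ):ℤ) = (j:ℤ) - 1 := by push_cast [Nat.cast_sub hj1]; ring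
  have him1 : ((i - 1 : ℕ):ℤ) = (i:ℤ) - 1 := by push_cast [Nat.cast_sub (by omega : 1 ≤ i)]; ring
  have hne2 : ((((lam (i-1):ℤ) - (i:ℤ) + (n:ℤ) : ℤ)) : ZMod p) ≠ r := by
    rw [hr]
    intro heq
    rw [ZMod.intCast_eq_intCast_iff] at heq
    have hd := Int.ModEq.dvd heq
    apply hkey
    have hrw : ((lam (j-1):ℤ) + 1 - (j:ℤ)) - ((lam (i-1):ℤ) - (i:ℤ))
        = (((lam (j-1):ℤ) + 1 - (j:ℤ) + (n:ℤ)) - ((lam (i-1):ℤ) - (i:ℤ) + (n:ℤ))) := by ring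
    rw [hrw]
    exact hd
  have hjlam_ne : ((((lam (j-1):ℤ) - ((j:ℤ) - 1 + 1) + (n:ℤ) : ℤ)) : ZMod p) ≠ r := by
    rw [hr]
    have hx : (lam (j-1):ℤ) + 1 - (j:ℤ) + (n:ℤ) = ((lam (j-1):ℤ) - ((j:ℤ) - 1 + 1) + (n:ℤ)) + 1 := by
      ring
    rw [hx]
    exact aux_succ_ne p hp2 _
  -- strict subset
  set Smu := (Finset.range n).filter (fun m => (((mu m : ℤ) - ((m:ℤ) + 1) + (n:ℤ) : ℤ) : ZMod p) = r) with hSmu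
  set Slam := (Finset.range n).filter (fun m => (((lam m : ℤ) - ((m:ℤ) + 1) + (n:ℤ) : ℤ) : ZMod p) = r) with hSlam
  have hsub : Slam ⊆ Smu := by
    intro m hm
    rw [hSlam, Finset.mem_filter] at hm
    rw [hSmu, Finset.mem_filter]
    obtain ⟨hmn, hmv⟩ := hm
    refine ⟨hmn, ?_⟩
    rcases eq_or_ne m (j-1) with hmj | hmj
    · exfalso
      subst hmj
      rw [hjm1] at hmv
      exact hjlam_ne hmv
    rcases eq_or_ne m (i-1) with hmi | hmi
    · exfalso
      subst hmi
      rw [him1] at hmv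
      apply hne2
      have hrw2 : (lam (i-1):ℤ) - ((i:ℤ) - 1 + 1) + (n:ℤ) = (lam (i-1):ℤ) - (i:ℤ) + (n:ℤ) := by ring
      rw [hrw2] at hmv
      exact hmv
    · rw [hmu m, if_neg hmj, removeBox, if_neg hmi]
      exact hmv
  have hjmem : j - 1 ∈ Smu := by
    rw [hSmu, Finset.mem_filter]
    constructor
    · exact Finset.mem_range.mpr (by omega)
    · rw [hmu (j-1), if_pos rfl, hjm1, hr]
      have hrw3 : ((lam (j-1) + 1 : ℕ):ℤ) - ((j:ℤ) - 1 + 1) + (n:ℤ) = (lam (j-1):ℤ) + 1 - (j:ℤ) + (n:ℤ) := by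
        push_cast; ring
      rw [hrw3]
  have hjnot : j - 1 ∉ Slam := by
    rw [hSlam, Finset.mem_filter]
    rintro ⟨-, hv⟩
    rw [hjm1] at hv
    exact hjlam_ne hv
  have hss : Slam ⊂ Smu := (Finset.ssubset_iff_of_subset hsub).mpr ⟨j-1, hjmem, hjnot⟩
  have hlt : Slam.card < Smu.card := Finset.card_lt_card hss
  omega
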